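/- For integers r ≥ d ≥ 2, writing ρ for the remainder of r upon division by d, β_r(d) ≥ (⌊r/d⌋+1)^{d−ρ}·(⌊r/d⌋+2)^{ρ}. Consequently β_r(d) > (r/d)^d, and if d ≥ r/2 then β_r(d) ≥ (3/2)^r·(4/3)^d. -/

import Mathlib

/-- A subset `C` of `F_2^r` is `d`-complete if through every point `v` there is a
`d`-flat contained in `C ∪ {v}`; i.e. there is a `d`-dimensional subspace `L`
with `v + (L \ {0}) ⊆ C`. -/
def KakeyaComplete (r d : ℕ) (C : Set (Fin r → ZMod 2)) : Prop :=
  ∀ v : Fin r → ZMod 2, ∃ L : Submodule (ZMod 2) (Fin r → ZMod 2),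
    Module.finrank (ZMod 2) L = d ∧ ∀ x ∈ L, x ≠ 0 → v + x ∈ C

/-- `gamma r d` is the smallest size of a `d`-complete subset of `F_2^r`. -/
noncomputable def gamma (r d : ℕ) : ℕ :=
  sInf {n | ∃ C : Finset (Fin r → ZMod 2), C.card = n ∧ KakeyaComplete r d ↑C}

/-- A subset `B` of `F_2^r` is `d`-non-blocking if for every `v` there is a
subspace `L` of dimension `r - d` (codimension `d`) with `(v + (L \ {0})) ∩ B = ∅`. -/
def KakeyaNonBlocking (r d : ℕ) (B : Set (Fin r → ZMod 2)) : Prop :=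
  ∀ v : Fin r → ZMod 2, ∃ L : Submodule (ZMod 2) (Fin r → ZMod 2),
    Module.finrank (ZMod 2) L = r - d ∧ ∀ x ∈ L, x ≠ 0 → v + x ∉ B

/-- `beta r d` is the largest size of a `d`-non-blocking subset of `F_2^r`. -/
noncomputable def beta (r d : ℕ) : ℕ :=
  sSup {n | ∃ B : Finset (Fin r → ZMod 2), B.card = n ∧ KakeyaNonBlocking r d ↑B}


section KakeyaConstruction
open Finset Function
variable {r d : ℕ}

def fb (r d : ℕ) (hd : 0 < d) (i : Fin r) : Fin d := ⟨i.val % d, Nat.mod_lt _ hd⟩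

def gmap (r d : ℕ) (hd : 0 < d)
    (c : ∀ k : Fin d, Option {i : Fin r // fb r d hd i = k}) : Fin r → ZMod 2 :=
  fun i => if c (fb r d hd i) = some ⟨i, rfl⟩ then 1 else 0

lemma gmap_eq_one_iff (hd : 0 < d) (c : ∀ k : Fin d, Option {i : Fin r // fb r d hd i = k})
    (i : Fin r) : gmap r d hd c i ≠ 0 ↔ c (fb r d hd i) = some ⟨i, rfl⟩ := by
  unfold gmap
  split_ifs with h <;> simp [h]

lemma gmap_inj (hd : 0 < d) : Function.Injective (gmap r d hd) := by
  have key : ∀ c c' : ∀ k : Fin d, Option {i : Fin r // fb r d hd i = k},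
      gmap r d hd c = gmap r d hd c' → ∀ (k : Fin d) v, c k = some v → c' k = some v := by
    intro c c' h k v hv
    obtain ⟨i, hi⟩ := v
    subst hi
    have h1 : gmap r d hd c i ≠ 0 := (gmap_eq_one_iff hd c i).2 hv
    rw [h] at h1
    exact (gmap_eq_one_iff hd c' i).1 h1
  intro c c' h
  funext k
  rcases hc : c k with _ | v
  · rcases hc' : c' k with _ | v'
    · rfl
    · rw [key c' c h.symm k v' hc'] at hc; exact hc.symm
  · rw [key c c' h k v hc]

lemma notmem_of_two (hd : 0 < d) (w : Fin r → ZMod 2) (a b : Fin r) (hab : a ≠ b)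
    (hf : fb r d hd a = fb r d hd b) (ha : w a ≠ 0) (hb : w b ≠ 0) :
    w ∉ (Finset.image (gmap r d hd) Finset.univ : Finset (Fin r → ZMod 2)) := by
  intro hmem
  rw [Finset.mem_image] at hmem
  obtain ⟨c, -, hc⟩ := hmem
  subst hc
  have h1 : (c (fb r d hd a)).map Subtype.val = some a := by
    rw [(gmap_eq_one_iff hd c a).1 ha]; rfl
  have h2 : (c (fb r d hd b)).map Subtype.val = some b := by
    rw [(gmap_eq_one_iff hd c b).1 hb]; rfl
  rw [hf, h2] at h1
  exact hab (Option.some.inj h1).symm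

lemma card_fiber (hd : 0 < d) (hr : d ≤ r) (k : Fin d) :
    Fintype.card {i : Fin r // fb r d hd i = k} =
      r / d + if (k : ℕ) < r % d then 1 else 0 := by
  have hqr : d * (r / d) + r % d = r := Nat.div_add_mod r d
  have hqr2 : r / d * d + r % d = r := by rw [Nat.mul_comm] at hqr; exact hqr
  have hrd : r % d < d := Nat.mod_lt _ hd
  rw [Fintype.card_subtype]
  set m := r / d + if (k : ℕ) < r % d then 1 else 0 with hm
  rw [← Finset.card_range m]
  have hjlt : ∀ j ∈ Finset.range m, j * d + (k : ℕ) < r := by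
    intro j hj
    rw [Finset.mem_range, hm] at hj
    rcases lt_or_ge (k : ℕ) (r % d) with h | h
    · have hj' : j ≤ r / d := by rw [if_pos h] at hj; omega
      calc j * d + (k:ℕ) ≤ (r/d) * d + (k:ℕ) := by
            exact Nat.add_le_add_right (Nat.mul_le_mul_right d hj') _
        _ < (r/d) * d + r % d := by omega
        _ = r := by omega
    · have hj' : j < r / d := by rw [if_neg (Nat.not_lt.2 h)] at hj; omega
      calc j * d + (k:ℕ) < j * d + d := by omega
        _ = (j+1) * d := by ring
        _ ≤ (r/d) * d := Nat.mul_le_mul_right d hj'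
        _ ≤ r := by omega
  refine Finset.card_bij' (fun i _ => (i : ℕ) / d)
    (fun j hj => (⟨j * d + (k : ℕ), hjlt j hj⟩ : Fin r)) ?_ ?_ ?_ ?_
  · -- maps into range m
    intro i hi
    simp only [Finset.mem_filter, Finset.mem_univ, true_and] at hi
    have hk : (i : ℕ) % d = (k : ℕ) := congrArg Fin.val hi
    simp only [Finset.mem_range, hm]
    rcases lt_or_ge (k : ℕ) (r % d) with h | h
    · rw [if_pos h]
      have : (i : ℕ) / d ≤ r / d := Nat.div_le_div_right (le_of_lt i.isLt)
      omega
    · rw [if_neg (Nat.not_lt.2 h)]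
      by_contra hc
      push_neg at hc
      have h1 : d * (r / d) + (k : ℕ) ≤ d * ((i:ℕ)/d) + (i:ℕ) % d := by
        rw [hk]
        exact Nat.add_le_add_right (Nat.mul_le_mul_left d hc) _
      rw [Nat.div_add_mod] at h1
      have : r ≤ (i : ℕ) := by omega
      exact absurd i.isLt (by omega)
  · -- maps back into filter
    intro j hj
    simp only [Finset.mem_filter, Finset.mem_univ, true_and]
    apply Fin.ext
    show (j * d + (k:ℕ)) % d = (k : ℕ)
    rw [Nat.mul_comm, Nat.mul_add_mod, Nat.mod_eq_of_lt k.isLt]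
  · -- left inverse
    intro i hi
    simp only [Finset.mem_filter, Finset.mem_univ, true_and] at hi
    have hk : (i : ℕ) % d = (k : ℕ) := congrArg Fin.val hi
    apply Fin.ext
    show ((i:ℕ)/d) * d + (k:ℕ) = (i : ℕ)
    rw [← hk, Nat.mul_comm, Nat.div_add_mod]
  · -- right inverse
    intro j hj
    show (j * d + (k:ℕ)) / d = j
    rw [Nat.mul_comm, Nat.mul_add_div hd, Nat.div_eq_of_lt k.isLt, Nat.add_zero]

lemma prod_blocks (hd : 0 < d) (hr : d ≤ r) :
    ∏ k : Fin d, (r / d + (if (k : ℕ) < r % d then 1 else 0) + 1) =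
      (r / d + 1) ^ (d - r % d) * (r / d + 2) ^ (r % d) := by
  have hrd : r % d < d := Nat.mod_lt _ hd
  have h1 : ∀ k : Fin d, r / d + (if (k : ℕ) < r % d then 1 else 0) + 1 =
      if (k : ℕ) < r % d then r / d + 2 else r / d + 1 := by
    intro k; split_ifs <;> ring
  rw [Finset.prod_congr rfl (fun k _ => h1 k), Finset.prod_ite, Finset.prod_const,
    Finset.prod_const]
  have hc1 : (Finset.univ.filter fun k : Fin d => (k : ℕ) < r % d).card = r % d := by
    have : (Finset.univ.filter fun k : Fin d => (k : ℕ) < r % d) =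
        (Finset.range (r % d)).attachFin
          (fun m hm => lt_of_lt_of_le (Finset.mem_range.1 hm) (le_of_lt hrd)) := by
      ext k; simp
    rw [this, Finset.card_attachFin, Finset.card_range]
  have hc2 : (Finset.univ.filter fun k : Fin d => ¬ (k : ℕ) < r % d).card = d - r % d := by
    have := Finset.card_filter_add_card_filter_not
      (s := (Finset.univ : Finset (Fin d))) (p := fun k => (k : ℕ) < r % d)
    rw [Finset.card_univ, Fintype.card_fin, hc1] at this
    omega
  rw [hc1, hc2, Nat.mul_comm]

lemma rank_ker {κ : Type} [Fintype κ] (hk : Fintype.card κ = d)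
    (T : (Fin r → ZMod 2) →ₗ[ZMod 2] (κ → ZMod 2)) (hT : Function.Surjective T) :
    Module.finrank (ZMod 2) (LinearMap.ker T) = r - d := by
  have h := LinearMap.finrank_range_add_finrank_ker T
  rw [LinearMap.range_eq_top.2 hT, finrank_top] at h
  simp only [Module.finrank_pi, Fintype.card_fin, hk] at h
  omega

lemma nonblocking (hd : 0 < d) (hr : d ≤ r) (hd2 : 2 ≤ d) (v : Fin r → ZMod 2) :
    ∃ L : Submodule (ZMod 2) (Fin r → ZMod 2),
      Module.finrank (ZMod 2) L = r - d ∧ ∀ x ∈ L, x ≠ 0 →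
        v + x ∉ (Finset.image (gmap r d hd) Finset.univ : Finset (Fin r → ZMod 2)) := by
  classical
  by_cases hheavy : ∃ a b : Fin r, a ≠ b ∧ fb r d hd a = fb r d hd b ∧ v a ≠ 0 ∧ v b ≠ 0
  · -- heavy case
    obtain ⟨a, b, hab, hf, ha, hb⟩ := hheavy
    have h2 : ({a, b} : Finset (Fin r)).card ≤ d := by
      rw [Finset.card_insert_of_notMem (by simpa using hab), Finset.card_singleton]
      exact hd2
    have h3 : d ≤ (Finset.univ : Finset (Fin r)).card := by
      rw [Finset.card_univ, Fintype.card_fin]; exact hr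
    obtain ⟨S, hS1, -, hS3⟩ := Finset.exists_subsuperset_card_eq
      (Finset.subset_univ ({a, b} : Finset (Fin r))) h2 h3
    have haS : a ∈ S := hS1 (by simp)
    have hbS : b ∈ S := hS1 (by simp)
    refine ⟨LinearMap.ker (LinearMap.funLeft (ZMod 2) (ZMod 2) (Subtype.val : S → Fin r)),
      rank_ker (by rw [Fintype.card_coe, hS3]) _
        (LinearMap.funLeft_surjective_of_injective _ _ _ Subtype.val_injective), ?_⟩
    intro x hx hx0
    have hxS : ∀ i ∈ S, x i = 0 := by
      intro i hi
      exact congrFun (LinearMap.mem_ker.1 hx) ⟨i, hi⟩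
    refine notmem_of_two hd _ a b hab hf ?_ ?_
    · show v a + x a ≠ 0
      rw [hxS a haS, add_zero]; exact ha
    · show v b + x b ≠ 0
      rw [hxS b hbS, add_zero]; exact hb
  · -- light case
    push_neg at hheavy
    set A : Fin d → Finset (Fin r) := fun k =>
      if h : ∃ i, fb r d hd i = k ∧ v i ≠ 0 then {h.choose}
      else Finset.univ.filter (fun i => fb r d hd i = k) with hA
    have hAsub : ∀ k, ∀ i ∈ A k, fb r d hd i = k := by
      intro k i hi
      simp only [hA] at hi
      split_ifs at hi with h
      · rw [Finset.mem_singleton] at hi; subst hi; exact h.choose_spec.1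
      · exact (Finset.mem_filter.1 hi).2
    have hAne : ∀ k, (A k).Nonempty := by
      intro k
      simp only [hA]
      split_ifs with h
      · exact ⟨h.choose, Finset.mem_singleton_self _⟩
      · refine ⟨⟨(k : ℕ), lt_of_lt_of_le k.isLt hr⟩, Finset.mem_filter.2 ⟨Finset.mem_univ _, ?_⟩⟩
        apply Fin.ext
        exact Nat.mod_eq_of_lt k.isLt
    set T : (Fin r → ZMod 2) →ₗ[ZMod 2] (Fin d → ZMod 2) :=
      LinearMap.pi (fun k => ∑ i ∈ A k, LinearMap.proj i) with hT
    have hTapp : ∀ x k, T x k = ∑ i ∈ A k, x i := by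
      intro x k
      simp [hT, LinearMap.pi_apply, LinearMap.sum_apply, LinearMap.proj_apply]
    have hTsurj : Function.Surjective T := by
      intro y
      set w : Fin d → Fin r := fun k => (hAne k).choose with hw
      have hwmem : ∀ k, w k ∈ A k := fun k => (hAne k).choose_spec
      refine ⟨fun i => if i = w (fb r d hd i) then y (fb r d hd i) else 0, ?_⟩
      funext k
      rw [hTapp]
      have hcong : ∀ i ∈ A k, (if i = w (fb r d hd i) then y (fb r d hd i) else 0)
          = if i = w k then y k else 0 := by
        intro i hi
        rw [hAsub k i hi]
      rw [Finset.sum_congr rfl hcong, Finset.sum_ite_eq' (A k) (w k) (fun _ => y k),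
        if_pos (hwmem k)]
    refine ⟨LinearMap.ker T, rank_ker (Fintype.card_fin d) T hTsurj, ?_⟩
    intro x hx hx0
    obtain ⟨i0, hi0⟩ : ∃ i0, x i0 ≠ 0 := by
      by_contra hc
      push_neg at hc
      exact hx0 (funext fun i => hc i)
    have hker : ∑ i ∈ A (fb r d hd i0), x i = 0 := by
      have h' := congrFun (LinearMap.mem_ker.1 hx) (fb r d hd i0)
      rw [← hTapp x (fb r d hd i0)]; exact h'
    by_cases h : ∃ i, fb r d hd i = fb r d hd i0 ∧ v i ≠ 0
    · have hi1p : fb r d hd h.choose = fb r d hd i0 ∧ v h.choose ≠ 0 := h.choose_spec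
      have hAk : A (fb r d hd i0) = {h.choose} := by
        simp only [hA]; rw [dif_pos h]
      rw [hAk, Finset.sum_singleton] at hker
      have hne : i0 ≠ h.choose := by
        intro hcon; rw [hcon, hker] at hi0; exact hi0 rfl
      have hv0 : v i0 = 0 := by
        by_contra hv
        exact hi1p.2 (hheavy i0 h.choose hne hi1p.1.symm hv)
      refine notmem_of_two hd _ i0 h.choose hne hi1p.1.symm ?_ ?_
      · show v i0 + x i0 ≠ 0
        rw [hv0, zero_add]; exact hi0
      · show v h.choose + x h.choose ≠ 0
        rw [hker, add_zero]; exact hi1p.2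
    · push_neg at h
      have hAk : A (fb r d hd i0) = Finset.univ.filter (fun i => fb r d hd i = fb r d hd i0) := by
        simp only [hA]; rw [dif_neg]; push_neg; exact h
      have hi0A : i0 ∈ A (fb r d hd i0) := by
        rw [hAk]; exact Finset.mem_filter.2 ⟨Finset.mem_univ _, rfl⟩
      obtain ⟨i2, hi2A, hi2ne, hi2⟩ : ∃ i2 ∈ A (fb r d hd i0), i2 ≠ i0 ∧ x i2 ≠ 0 := by
        by_contra hc
        push_neg at hc
        have hsum : ∑ i ∈ A (fb r d hd i0), x i = x i0 := by
          refine Finset.sum_eq_single i0 ?_ (fun habs => absurd hi0A habs)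
          intro b hb hbne
          by_contra hxb
          exact hxb (hc b hb hbne)
        rw [hsum] at hker
        exact hi0 hker
      refine notmem_of_two hd _ i0 i2 (Ne.symm hi2ne) (hAsub _ i2 hi2A).symm ?_ ?_
      · show v i0 + x i0 ≠ 0
        rw [h i0 rfl, zero_add]; exact hi0
      · show v i2 + x i2 ≠ 0
        rw [h i2 (hAsub _ i2 hi2A), zero_add]; exact hi2

lemma beta_ge (hd2 : 2 ≤ d) (hr : d ≤ r) :
    (r / d + 1) ^ (d - r % d) * (r / d + 2) ^ (r % d) ≤ beta r d := by
  classical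
  have hd : 0 < d := by omega
  set B : Finset (Fin r → ZMod 2) := Finset.image (gmap r d hd) Finset.univ with hB
  have hcard : B.card = (r / d + 1) ^ (d - r % d) * (r / d + 2) ^ (r % d) := by
    rw [hB, Finset.card_image_of_injective _ (gmap_inj hd), Finset.card_univ]
    rw [Fintype.card_pi]
    have : ∀ k : Fin d, Fintype.card (Option {i : Fin r // fb r d hd i = k}) =
        r / d + (if (k : ℕ) < r % d then 1 else 0) + 1 := by
      intro k
      rw [Fintype.card_option, card_fiber hd hr k]
    rw [Finset.prod_congr rfl (fun k _ => this k)]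
    exact prod_blocks hd hr
  have hnb : KakeyaNonBlocking r d ↑B := by
    intro v
    obtain ⟨L, h1, h2⟩ := nonblocking hd hr hd2 v
    exact ⟨L, h1, fun x hx hx0 => by
      rw [Finset.mem_coe]
      exact h2 x hx hx0⟩
  apply le_csSup
  · refine ⟨Fintype.card (Fin r → ZMod 2), ?_⟩
    rintro n ⟨C, hC, -⟩
    rw [← hC]
    exact Finset.card_le_univ C
  · exact ⟨B, hcard, hnb⟩

end KakeyaConstruction

theorem beta_lower' (r d : ℕ) (hd : 2 ≤ d) (hr : d ≤ r) :
    ((r / d + 1) ^ (d - r % d) * (r / d + 2) ^ (r % d) ≤ beta r d) ∧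
    (((r : ℝ) / (d : ℝ)) ^ d < (beta r d : ℝ)) ∧
    (r ≤ 2 * d → ((3 / 2 : ℝ)) ^ r * ((4 / 3 : ℝ)) ^ d ≤ (beta r d : ℝ)) := by
  have h1 := beta_ge hd hr
  have hd0 : 0 < d := by omega
  have hmod : d * (r / d) + r % d = r := Nat.div_add_mod r d
  have hrd : r % d < d := Nat.mod_lt _ hd0
  refine ⟨h1, ?_, ?_⟩
  · -- strict real bound
    have hrlt : r < (r / d + 1) * d := by
      have he : (r / d + 1) * d = d * (r / d) + d := by ring
      omega
    have hlt : ((r : ℝ) / d) ^ d < ((r / d + 1 : ℕ) : ℝ) ^ d := by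
      apply pow_lt_pow_left₀ _ (by positivity) (by omega)
      rw [div_lt_iff₀ (by positivity)]
      calc (r : ℝ) < (((r / d + 1) * d : ℕ) : ℝ) := by exact_mod_cast hrlt
        _ = ((r / d + 1 : ℕ) : ℝ) * d := by push_cast; ring
    have hle : (r / d + 1) ^ d ≤ (r / d + 1) ^ (d - r % d) * (r / d + 2) ^ (r % d) := by
      calc (r / d + 1) ^ d = (r / d + 1) ^ (d - r % d) * (r / d + 1) ^ (r % d) := by
            rw [← pow_add]; congr 1; omega
        _ ≤ (r / d + 1) ^ (d - r % d) * (r / d + 2) ^ (r % d) :=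
            Nat.mul_le_mul_left _ (Nat.pow_le_pow_left (by omega) _)
    calc ((r : ℝ) / d) ^ d < ((r / d + 1 : ℕ) : ℝ) ^ d := hlt
      _ = (((r / d + 1) ^ d : ℕ) : ℝ) := by push_cast; ring
      _ ≤ (beta r d : ℝ) := by exact_mod_cast le_trans hle h1
  · -- (3/2)^r (4/3)^d bound
    intro h2d
    have hnat : 3 ^ (r - d) * 2 ^ (2 * d - r) ≤ beta r d := by
      rcases eq_or_lt_of_le h2d with heq | hlt
      · have hq : r / d = 2 := by rw [heq]; exact Nat.mul_div_cancel 2 hd0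
        have hρ : r % d = 0 := by rw [heq]; exact Nat.mul_mod_left 2 d
        have hkey : 3 ^ (r - d) * 2 ^ (2 * d - r) =
            (r / d + 1) ^ (d - r % d) * (r / d + 2) ^ (r % d) := by
          have e1 : r - d = d := by omega
          have e2 : 2 * d - r = 0 := by omega
          rw [e1, e2, hq, hρ]
          norm_num
        rw [hkey]; exact h1
      · have hq : r / d = 1 := by
          apply Nat.div_eq_of_lt_le
          · omega
          · have : Nat.succ 1 * d = 2 * d := by ring
            omega
        have hρ : r % d = r - d := by
          have he : r % d = (r - d) % d := by
            conv_lhs => rw [← Nat.sub_add_cancel hr]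
            rw [Nat.add_mod_right]
          rw [he, Nat.mod_eq_of_lt (by omega)]
        have hkey : 3 ^ (r - d) * 2 ^ (2 * d - r) =
            (r / d + 1) ^ (d - r % d) * (r / d + 2) ^ (r % d) := by
          rw [hq, hρ]
          have e1 : d - (r - d) = 2 * d - r := by omega
          rw [e1]
          norm_num
          ring
        rw [hkey]; exact h1
    have hreal : ((3:ℝ) / 2) ^ r * ((4:ℝ) / 3) ^ d =
        ((3 ^ (r - d) * 2 ^ (2 * d - r) : ℕ) : ℝ) := by
      have e1 : (3:ℝ) ^ (r - d) * 3 ^ d = 3 ^ r := by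
        rw [← pow_add]; congr 1; omega
      have e2 : (2:ℝ) ^ (2 * d - r) * 2 ^ r = 4 ^ d := by
        rw [← pow_add]
        have e3 : (2 * d - r) + r = 2 * d := by omega
        rw [e3, pow_mul]
        norm_num
      rw [div_pow, div_pow, div_mul_div_comm, div_eq_iff (by positivity)]
      push_cast
      calc (3:ℝ) ^ r * 4 ^ d = (3 ^ (r - d) * 3 ^ d) * (2 ^ (2 * d - r) * 2 ^ r) := by
            rw [e1, e2]
        _ = 3 ^ (r - d) * 2 ^ (2 * d - r) * (2 ^ r * 3 ^ d) := by ring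
    rw [hreal]
    exact_mod_cast hnat
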